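/- Let z_1, …, z_K ∈ ℝ^d (with d ≥ K ≥ 2) be unit vectors whose sum is zero, and let Z = [z_1, …, z_K] ∈ ℝ^{d×K}. If the Gram matrix ZᵀZ has effective rank K − 1, then ZᵀZ has eigenvalue K/(K−1) with multiplicity K − 1 and eigenvalue 0 with multiplicity 1; equivalently, there exists an orthogonal matrix Q ∈ ℝ^{K×K} such that Qᵀ(ZᵀZ)Q = (K/(K−1))·(I_K − (1/K)·1_K 1_Kᵀ). -/

import Mathlib

open Matrix MeasureTheory

/-- Principal matrix logarithm of a real symmetric matrix, defined via the spectral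
decomposition by applying `Real.log` to the eigenvalues (junk value `0` otherwise). -/
noncomputable def matrixLog {n : Type*} [Fintype n] [DecidableEq n]
    (A : Matrix n n ℝ) : Matrix n n ℝ :=
  if hA : A.IsHermitian then
    (hA.eigenvectorUnitary : Matrix n n ℝ) * Matrix.diagonal (Real.log ∘ hA.eigenvalues) *
      star (hA.eigenvectorUnitary : Matrix n n ℝ)
  else 0

/-- Matrix KL divergence `MKL(P‖Q) = tr(P log P − P log Q − P + Q)`. -/
noncomputable def MKL {n : Type*} [Fintype n] [DecidableEq n]
    (P Q : Matrix n n ℝ) : ℝ :=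
  (P * matrixLog P - P * matrixLog Q - P + Q).trace

/-- Matrix cross-entropy `MCE(P, Q) = tr(−P log Q + Q)`. -/
noncomputable def MCE {n : Type*} [Fintype n] [DecidableEq n]
    (P Q : Matrix n n ℝ) : ℝ :=
  (-(P * matrixLog Q) + Q).trace

/-- Effective rank of a symmetric matrix (junk value `0` if not Hermitian), defined as the
exponential of the Shannon entropy of the normalized eigenvalue distribution; note that
`Real.log 0 = 0` in Mathlib, implementing the convention `0 · log 0 = 0`. -/
noncomputable def erank {n : Type*} [Fintype n] [DecidableEq n]
    (A : Matrix n n ℝ) : ℝ :=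
  if hA : A.IsHermitian then
    Real.exp (-∑ i, (hA.eigenvalues i / ∑ k, hA.eigenvalues k) *
      Real.log (hA.eigenvalues i / ∑ k, hA.eigenvalues k))
  else 0

/-- Total coding rate loss `L_TCR(Z) = −(1/2)·log det(I_d + (d/(Bε²))·ZZᵀ)`. -/
noncomputable def LTCR {d B : ℕ} (ε : ℝ) (Z : Matrix (Fin d) (Fin B) ℝ) : ℝ :=
  -(1 / 2) * Real.log ((1 + ((d : ℝ) / (B * ε ^ 2)) • (Z * Zᵀ)).det)

/-- Let `z_1, …, z_K ∈ ℝ^d` (with `d ≥ K ≥ 2`) be unit vectors summing to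
zero, assembled as the columns of `Z ∈ ℝ^{d×K}`. If `erank(ZᵀZ) = K − 1`, then there is an
orthogonal `Q` with `Qᵀ(ZᵀZ)Q = (K/(K−1))·(I_K − (1/K)·1_K1_Kᵀ)` (equivalently, `ZᵀZ` has
eigenvalue `K/(K−1)` with multiplicity `K − 1` and eigenvalue `0` with multiplicity `1`). -/
theorem max_erank_gram_etf {d K : ℕ} (hK : 2 ≤ K) (hd : K ≤ d)
    (Z : Matrix (Fin d) (Fin K) ℝ)
    (hunit : ∀ j, ∑ i, (Z i j) ^ 2 = 1) (hsum : ∀ i, ∑ j, Z i j = 0)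
    (herank : erank (Zᵀ * Z) = (K : ℝ) - 1) :
    ∃ Q : Matrix (Fin K) (Fin K) ℝ, Qᵀ * Q = 1 ∧
      Qᵀ * (Zᵀ * Z) * Q = ((K : ℝ) / ((K : ℝ) - 1)) •
        ((1 : Matrix (Fin K) (Fin K) ℝ) - (K : ℝ)⁻¹ • Matrix.of (fun _ _ => (1 : ℝ))) := by
  have hKpos : (0:ℝ) < K := by positivity
  have hK1 : (1:ℝ) < K := by exact_mod_cast hK
  have hK1pos : (0:ℝ) < (K:ℝ) - 1 := by linarith
  set A := Zᵀ * Z with hAdef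
  have hPSD : A.PosSemidef := posSemidef_conjTranspose_mul_self Z
  have hA : A.IsHermitian := hPSD.1
  set μ := hA.eigenvalues with hμdef
  have hμ0 : ∀ i, 0 ≤ μ i := hPSD.eigenvalues_nonneg
  -- trace = K
  have htrA : A.trace = K := by
    rw [Matrix.trace]
    have h : ∀ j, A j j = 1 := by
      intro j
      simpa [A, Matrix.mul_apply, pow_two] using hunit j
    simp [h, Finset.card_univ]
  have htr : ∑ i, μ i = K := by
    have h1 : A.trace = ∑ i, μ i := by
      conv_lhs => rw [hA.spectral_theorem, Unitary.conjStarAlgAut_apply]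
      rw [Matrix.trace_mul_cycle]
      have : (star (hA.eigenvectorUnitary : Matrix (Fin K) (Fin K) ℝ)) *
          (hA.eigenvectorUnitary : Matrix (Fin K) (Fin K) ℝ) = 1 :=
        (Matrix.mem_unitaryGroup_iff').mp hA.eigenvectorUnitary.2
      rw [this, one_mul, Matrix.trace_diagonal]
      simp
      rfl
    rw [← h1, htrA]
  -- kernel vector
  have hker : ∀ i, ∑ j, A i j = 0 := by
    intro i
    have : ∑ j, A i j = ∑ k, Z k i * ∑ j, Z k j := by
      simp only [A, Matrix.mul_apply, Matrix.transpose_apply, Finset.mul_sum]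
      rw [Finset.sum_comm]
    rw [this]
    simp [hsum]
  -- det = 0, so some eigenvalue is zero
  have hdet : A.det = 0 := by
    rw [← Matrix.exists_mulVec_eq_zero_iff]
    refine ⟨fun _ => 1, ?_, ?_⟩
    · intro h
      have := congrFun h ⟨0, by omega⟩
      simp at this
    · ext i
      simpa [Matrix.mulVec, dotProduct] using hker i
  obtain ⟨i0, -, hμi0⟩ : ∃ i ∈ Finset.univ, μ i = 0 := by
    have := hA.det_eq_prod_eigenvalues
    rw [hdet] at this
    have h2 : ∏ i, μ i = 0 := by
      have := this.symm
      simpa using this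
    exact Finset.prod_eq_zero_iff.mp h2
  -- entropy condition
  have hent : ∑ i, Real.negMulLog (μ i / K) = Real.log ((K:ℝ) - 1) := by
    have h1 : erank A = Real.exp (-∑ i, (μ i / ∑ k, μ k) * Real.log (μ i / ∑ k, μ k)) := by
      rw [erank, dif_pos hA]
    rw [herank] at h1
    have h2 : -∑ i, (μ i / ∑ k, μ k) * Real.log (μ i / ∑ k, μ k) = Real.log ((K:ℝ) - 1) := by
      rw [← Real.log_exp (-∑ i, (μ i / ∑ k, μ k) * Real.log (μ i / ∑ k, μ k)), ← h1]
    rw [← h2, htr]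
    rw [← Finset.sum_neg_distrib]
    exact Finset.sum_congr rfl fun i _ => by rw [Real.negMulLog]; ring
  -- Jensen equality
  set c : ℝ := (K:ℝ) / ((K:ℝ) - 1) with hcdef
  have hcard : (Finset.univ.erase i0).card = K - 1 := by
    simp [Finset.card_erase_of_mem]
  have hcardR : ((Finset.univ.erase i0).card : ℝ) = (K:ℝ) - 1 := by
    rw [hcard]; push_cast [Nat.cast_sub (by omega : 1 ≤ K)]; ring
  have hμc : ∀ i, i ≠ i0 → μ i = c := by
    have t := Finset.univ.erase i0
    set w : Fin K → ℝ := fun _ => 1 / ((K:ℝ) - 1) with hwdef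
    have hw1 : ∑ i ∈ Finset.univ.erase i0, w i = 1 := by
      simp only [hwdef]
      rw [Finset.sum_const, nsmul_eq_mul, hcardR, mul_one_div, div_self (by linarith)]
    have hsumt : ∑ i ∈ Finset.univ.erase i0, μ i = K := by
      rw [← htr]
      rw [Finset.sum_erase _ (by rw [hμi0])]
    have hbary : ∑ i ∈ Finset.univ.erase i0, w i • (μ i / K) = 1 / ((K:ℝ) - 1) := by
      simp only [smul_eq_mul, hwdef, ← Finset.mul_sum]
      rw [← Finset.sum_div, hsumt]
      field_simp
    have hJ := (Real.strictConcaveOn_negMulLog.map_sum_eq_iff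
      (t := Finset.univ.erase i0) (w := w) (p := fun i => μ i / K)
      (fun i _ => by rw [hwdef]; positivity) hw1
      (fun i _ => by exact div_nonneg (hμ0 i) (le_of_lt hKpos)))
    rw [hbary] at hJ
    have hLHS : Real.negMulLog (1 / ((K:ℝ) - 1)) =
        ∑ i ∈ Finset.univ.erase i0, w i • Real.negMulLog (μ i / K) := by
      -- LHS = log(K-1)/(K-1); RHS = (1/(K-1)) * Σ_univ negMulLog = log(K-1)/(K-1)
      have hR : ∑ i ∈ Finset.univ.erase i0, w i • Real.negMulLog (μ i / K)
          = (1 / ((K:ℝ) - 1)) * ∑ i ∈ Finset.univ.erase i0, Real.negMulLog (μ i / K) := by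
        simp only [smul_eq_mul, hwdef, Finset.mul_sum]
      have hfull : ∑ i ∈ Finset.univ.erase i0, Real.negMulLog (μ i / K)
          = ∑ i, Real.negMulLog (μ i / K) := by
        rw [Finset.sum_erase _ (by rw [hμi0]; simp)]
      rw [hR, hfull, hent, Real.negMulLog, Real.log_div one_ne_zero (by linarith),
        Real.log_one]
      ring
    have hall := hJ.mp hLHS
    intro i hi
    have h3 := hall i (Finset.mem_erase.mpr ⟨hi, Finset.mem_univ i⟩)
    rw [hcdef]
    field_simp at h3 ⊢
    linarith [h3]
  -- spectral reconstruction
  set U : Matrix (Fin K) (Fin K) ℝ := (hA.eigenvectorUnitary : Matrix (Fin K) (Fin K) ℝ)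
    with hUdef
  have hU1 : star U * U = 1 := (Matrix.mem_unitaryGroup_iff').mp hA.eigenvectorUnitary.2
  have hU2 : U * star U = 1 := (Matrix.mem_unitaryGroup_iff).mp hA.eigenvectorUnitary.2
  set v : Fin K → ℝ := fun i => U i i0 with hvdef
  have hAij : ∀ i j, A i j = c * ((if i = j then (1:ℝ) else 0) - v i * v j) := by
    intro i j
    have hentry : A i j = ∑ k, U i k * μ k * U j k := by
      conv_lhs => rw [hA.spectral_theorem, Unitary.conjStarAlgAut_apply]
      rw [← hUdef]
      simp only [Matrix.mul_apply, Matrix.star_apply, star_trivial,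
        RCLike.ofReal_real_eq_id, Matrix.diagonal_apply, Function.comp, id_eq,
        mul_ite, mul_zero, ite_mul, zero_mul, Finset.sum_ite_eq, Finset.sum_ite_eq',
        Finset.mem_univ, if_true]
      rfl
    have hUU : ∑ k, U i k * U j k = if i = j then (1:ℝ) else 0 := by
      have h2 := congrFun (congrFun hU2 i) j
      simpa [Matrix.mul_apply, Matrix.conjTranspose_apply, Matrix.one_apply] using h2
    have hterm : ∀ k, U i k * μ k * U j k =
        c * (U i k * U j k) - c * (if k = i0 then U i k * U j k else 0) := by
      intro k
      by_cases h : k = i0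
      · subst h; simp [hμi0]
      · rw [hμc k h]; simp [h]; ring
    rw [hentry, Finset.sum_congr rfl (fun k _ => hterm k), Finset.sum_sub_distrib,
      ← Finset.mul_sum, ← Finset.mul_sum, hUU, Finset.sum_ite_eq' Finset.univ i0]
    simp only [Finset.mem_univ, if_true]
    ring
  set s : ℝ := ∑ j, v j with hsdef
  have hvs : ∀ i, v i * s = 1 := by
    intro i
    have h0 := hker i
    rw [Finset.sum_congr rfl (fun j _ => hAij i j)] at h0
    have h1 : ∑ j, c * ((if i = j then (1:ℝ) else 0) - v i * v j) = c * (1 - v i * s) := by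
      rw [← Finset.mul_sum, Finset.sum_sub_distrib, Finset.sum_ite_eq Finset.univ i]
      simp only [Finset.mem_univ, if_true, ← Finset.mul_sum, ← hsdef]
    rw [h1] at h0
    have hc0 : c ≠ 0 := by
      rw [hcdef]; positivity
    have := (mul_eq_zero.mp h0).resolve_left hc0
    linarith
  have hnorm : ∑ i, v i ^ 2 = 1 := by
    have h2 := congrFun (congrFun hU1 i0) i0
    simpa [Matrix.mul_apply, Matrix.conjTranspose_apply, Matrix.one_apply, pow_two]
      using h2
  have hs0 : s ≠ 0 := by
    intro h
    have := hvs i0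
    rw [h, mul_zero] at this
    exact one_ne_zero this.symm
  have hveq : ∀ i, v i = 1 / s := by
    intro i
    field_simp
    have := hvs i
    linarith
  have hvv : ∀ i j, v i * v j = (K:ℝ)⁻¹ := by
    intro i j
    have h1 : ∑ i, v i ^ 2 = (K:ℝ) * (1 / s) ^ 2 := by
      rw [Finset.sum_congr rfl (fun i _ => by rw [hveq i]), Finset.sum_const,
        Finset.card_univ, Fintype.card_fin, nsmul_eq_mul]
    rw [hnorm] at h1
    rw [hveq i, hveq j]
    have hK0 : (K:ℝ) ≠ 0 := ne_of_gt hKpos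
    field_simp at h1 ⊢
    linarith
  refine ⟨1, by simp, ?_⟩
  rw [Matrix.transpose_one, one_mul, mul_one]
  ext i j
  rw [hAij i j, hvv i j]
  simp [Matrix.smul_apply, Matrix.sub_apply, Matrix.one_apply, hcdef, mul_sub]
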